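/- arXiv:1711.10571 — 4 statements merged into one kernel-verified Lean document; each statement's English description precedes it below -/
import Mathlib

section
/- Fix a commutative ring R (e.g. Z/p^{m+1}Z), and let u = I_4 + E_{1,3} (the 4×4 identity matrix plus the elementary matrix with 1 in position (1,3)). Let g ∈ GL_4(R) be of the form g = [[a_1, 0, 0, 0],[0, a_4, 0, 0],[0, c, d_1, 0],[0, 0, 0, 1]] with a_1, a_4, d_1 ∈ R^×. If u g u^{-1} satisfies the symplectic condition (u g u^{-1})^T J (u g u^{-1}) = α J for some α ∈ R^×, then a_1 = d_1, a_4 = 1, c = 0, and α = a_1; in particular g = diag(a_1, 1, a_1, 1). -/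
open Matrix

/-- Split-case computation of Lemma A.1: with `u = I + E_{1,3}` (inverse `v = I - E_{1,3}`)
and `g = [[a₁,0,0,0],[0,a₄,0,0],[0,c,d₁,0],[0,0,0,1]]`, if `u g u⁻¹` is a symplectic
similitude with multiplier `α`, then `a₁ = d₁`, `a₄ = 1`, `c = 0`, `α = a₁`, and
`g = diag(a₁, 1, a₁, 1)`. -/
theorem stmt_13 (R : Type*) [CommRing R] (a₁ a₄ d₁ α : Rˣ) (c : R) :
    let J : Matrix (Fin 4) (Fin 4) R := !![0,0,0,1; 0,0,1,0; 0,-1,0,0; -1,0,0,0]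
    let u : Matrix (Fin 4) (Fin 4) R := !![1,0,1,0; 0,1,0,0; 0,0,1,0; 0,0,0,1]
    let v : Matrix (Fin 4) (Fin 4) R := !![1,0,-1,0; 0,1,0,0; 0,0,1,0; 0,0,0,1]
    let gmat : Matrix (Fin 4) (Fin 4) R :=
      !![(a₁ : R),0,0,0; 0,(a₄ : R),0,0; 0,c,(d₁ : R),0; 0,0,0,1]
    u * v = 1 →
    (u * gmat * v)ᵀ * J * (u * gmat * v) = (α : R) • J →
    (a₁ : R) = (d₁ : R) ∧ (a₄ : R) = 1 ∧ c = 0 ∧ (α : R) = (a₁ : R) ∧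
      gmat = Matrix.diagonal ![(a₁ : R), 1, (a₁ : R), 1] := by
  intro J u v gmat huv hsym
  simp only [J, u, v, gmat] at hsym
  have e := fun i j => congrFun (congrFun hsym i) j
  have e03 := e 0 3; have e13 := e 1 3; have e23 := e 2 3; have e12 := e 1 2
  simp [Matrix.mul_apply, Fin.sum_univ_four, Matrix.transpose_apply, Matrix.vecHead,
    Matrix.vecTail, Function.comp] at e03 e13 e23 e12
  -- e03 : a₁ = α ; e13 : c = 0 ; e23 : -a₁ + d₁ = 0 ; e12 : a₄ * d₁ = α
  have h1 : (a₁ : R) = (d₁ : R) := by linear_combination -e23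
  have h4 : (a₄ : R) = 1 := by
    have : (a₄ : R) * (d₁ : R) = 1 * (d₁ : R) := by
      rw [e12, one_mul, ← e03, h1]
    exact d₁.isUnit.mul_right_cancel this
  refine ⟨h1, h4, e13, e03.symm, ?_⟩
  ext i j
  fin_cases i <;> fin_cases j <;>
    simp [gmat, Matrix.diagonal, Matrix.vecHead, Matrix.vecTail, Function.comp, h1, h4, e13]
end

section
/- Let p be a prime inert in the imaginary quadratic field F, let O_{F_p} be the ring of integers of the completion F_p, and let e ∈ O_{F_p} be an element generating O_F/(pO_F + Z). Let u = I_4 + e·E_{1,3} + ē·E_{2,4} ∈ GL_4(O_{F_p}). Let g be a matrix over O_{F_p}/p^{m+1}O_{F_p} of the form g = [[a_1, 0, 0, 0],[0, a_4, 0, 0],[0, c_2, d_1, 0],[0, 0, 0, 1]] with a_1, a_4, d_1 units. If all entries of u g u^{-1} lie in the image of Z_p (i.e., are fixed by the conjugation ē), then a_1 = d_1, a_4 = 1, and c_2 = 0 in O_{F_p}/p^{m+1}O_{F_p}. -/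
open Matrix

/-- Inert-case computation of Lemma A.3: over `R = O_{F_p}/p^{m+1}` with conjugation `σ`
(an involutive ring endomorphism) and `e` with `σ e - e` a unit (as `e` generates
`O_F/(pO_F + ℤ)`), if all entries of `u g u⁻¹` are fixed by `σ` — where
`u = I + e·E_{1,3} + ē·E_{2,4}` (inverse `v = I - e·E_{1,3} - ē·E_{2,4}`) and
`g = [[a₁,0,0,0],[0,a₄,0,0],[0,c₂,d₁,0],[0,0,0,1]]` — then `a₁ = d₁`, `a₄ = 1`, `c₂ = 0`. -/
theorem stmt_15 (R : Type*) [CommRing R] (σ : R →+* R) (hσ : ∀ x, σ (σ x) = x)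
    (e : R) (he : IsUnit (σ e - e)) (a₁ a₄ d₁ : Rˣ) (c₂ : R) :
    let u : Matrix (Fin 4) (Fin 4) R := !![1,0,e,0; 0,1,0,σ e; 0,0,1,0; 0,0,0,1]
    let v : Matrix (Fin 4) (Fin 4) R := !![1,0,-e,0; 0,1,0,-(σ e); 0,0,1,0; 0,0,0,1]
    let gmat : Matrix (Fin 4) (Fin 4) R :=
      !![(a₁ : R),0,0,0; 0,(a₄ : R),0,0; 0,c₂,(d₁ : R),0; 0,0,0,1]
    u * v = 1 →
    (∀ i j, σ ((u * gmat * v) i j) = (u * gmat * v) i j) →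
    (a₁ : R) = (d₁ : R) ∧ (a₄ : R) = 1 ∧ c₂ = 0 := by
  intro u v gmat huv hfix
  have h11 := hfix 0 0
  have h13 := hfix 0 2
  have h22 := hfix 1 1
  have h24 := hfix 1 3
  have h32 := hfix 2 1
  have h33 := hfix 2 2
  have h34 := hfix 2 3
  simp only [u, v, gmat] at h11 h13 h22 h24 h32 h33 h34
  simp [Matrix.mul_apply, Fin.sum_univ_four, hσ, Matrix.vecHead, Matrix.vecTail, Function.comp, mul_sub, sub_mul, mul_comm, _root_.map_mul,
    _root_.map_sub, map_neg, _root_.map_one] at h11 h13 h22 h24 h32 h33 h34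
  have hc : c₂ = 0 := by
    have h : (σ e - e) * c₂ = 0 := by linear_combination e * h32 - h34
    exact (he.mul_right_eq_zero).1 h
  have ha : (a₄ : R) = 1 := by
    have h : (σ e - e) * (1 - (a₄ : R)) = 0 := by linear_combination -h24 - e * h22
    have h2 := (he.mul_right_eq_zero).1 h
    linear_combination -h2
  have had : (a₁ : R) = (d₁ : R) := by
    have h : (σ e - e) * ((d₁ : R) - (a₁ : R)) = 0 := by
      linear_combination h13 - σ e * h33 + σ e * h11
    have h2 := (he.mul_right_eq_zero).1 h
    linear_combination -h2
  exact ⟨had, ha, hc⟩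
end

section
/- The index of V'_{N p^n, p^m} in V_{N p^n, p^m} equals p^{10}, where these are the congruence subgroups of GL_4(Z_p) × Z_p^× (the split-case model of GU(2,2)(Z_p)) defined by the indicated congruence conditions; a full set of left coset representatives is given by the p^{10} upper unitriangular matrices σ_v = I + p^m k_1 E_{1,2} + p^{2m} r_1 E_{1,3} + p^{3m} r_2 E_{1,4} + p^m r_3 E_{2,3} + p^{2m} r_4 E_{2,4} + p^m k_2 E_{3,4} where r_2 ranges over Z/p^3, r_1 and r_4 over Z/p^2, and k_1, r_3, k_2 over Z/p. -/
open Matrix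

namespace Stmt16
variable {p : ℕ} [Fact p.Prime]

lemma pne : (p:ℤ_[p]) ≠ 0 :=
  Nat.cast_ne_zero.mpr (Fact.out : p.Prime).ne_zero

lemma dvd_iff_pow (k : ℕ) (z : ℤ_[p]) :
    (p:ℤ_[p])^k ∣ z ↔ PadicInt.toZModPow k z = 0 := by
  rw [← Ideal.mem_span_singleton, ← PadicInt.ker_toZModPow, RingHom.mem_ker]

lemma dvd_iff_one (z : ℤ_[p]) : (p:ℤ_[p]) ∣ z ↔ PadicInt.toZMod z = 0 := by
  rw [← Ideal.mem_span_singleton, ← PadicInt.maximalIdeal_eq_span_p,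
    ← PadicInt.ker_toZMod, RingHom.mem_ker]

lemma isUnit_of_toZMod_ne_zero (x : ℤ_[p]) (h : PadicInt.toZMod x ≠ 0) : IsUnit x := by
  by_contra hu
  exact h (by rw [← RingHom.mem_ker, PadicInt.ker_toZMod]; exact hu)

lemma key1U (A V Vi J : ℤ_[p]) (hV : V * Vi = 1) (c : ZMod p) :
    (p:ℤ_[p]) ∣ (A - (c.val : ℤ_[p]) * V + (p:ℤ_[p]) * J) ↔
      c = PadicInt.toZMod (A * Vi) := by
  have hv2 : PadicInt.toZMod V * PadicInt.toZMod Vi = 1 := by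
    rw [← _root_.map_mul, hV, _root_.map_one]
  rw [dvd_iff_one]
  simp only [_root_.map_add, _root_.map_sub, _root_.map_mul, _root_.map_natCast, ZMod.natCast_self, zero_mul, add_zero,
    ZMod.natCast_rightInverse c]
  constructor
  · intro h
    linear_combination (-PadicInt.toZMod Vi) * h - c * hv2
  · intro h
    rw [h]
    linear_combination (-(PadicInt.toZMod A)) * hv2

lemma keyU (k : ℕ) (A V Vi J : ℤ_[p]) (hV : V * Vi = 1) (c : ZMod (p^k)) :
    (p:ℤ_[p])^k ∣ (A - (c.val : ℤ_[p]) * V + (p:ℤ_[p])^k * J) ↔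
      c = PadicInt.toZModPow k (A * Vi) := by
  haveI : NeZero (p^k) := ⟨pow_ne_zero _ (Fact.out : p.Prime).ne_zero⟩
  have hv2 : PadicInt.toZModPow k V * PadicInt.toZModPow k Vi = 1 := by
    rw [← _root_.map_mul, hV, _root_.map_one]
  have hz : ((p:ℕ) : ZMod (p^k))^k = 0 := by rw [← Nat.cast_pow, ZMod.natCast_self]
  rw [dvd_iff_pow]
  simp only [_root_.map_add, _root_.map_sub, _root_.map_mul, _root_.map_pow, _root_.map_natCast, hz, zero_mul, add_zero,
    ZMod.natCast_rightInverse c]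
  constructor
  · intro h
    linear_combination (-PadicInt.toZModPow k Vi) * h - c * hv2
  · intro h
    rw [h]
    linear_combination (-(PadicInt.toZModPow k A)) * hv2

end Stmt16

set_option maxHeartbeats 4000000 in
/-- The index `[V_{Np^n,p^m} : V'_{Np^n,p^m}] = p^{10}` (split-case model
`GU(2,2)(ℤ_p) ≅ GL₄(ℤ_p) × ℤ_pˣ`): every element of `V_{Np^n,p^m}` lies in exactly one
left coset `σ_w · V'_{Np^n,p^m}`, where `σ_w` ranges over the `p^{10}` upper unitriangular
matrices `I + p^m k₁ E_{1,2} + p^{2m} r₁ E_{1,3} + p^{3m} r₂ E_{1,4} + p^m r₃ E_{2,3}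
+ p^{2m} r₄ E_{2,4} + p^m k₂ E_{3,4}` with `r₂ ∈ ℤ/p³`, `r₁, r₄ ∈ ℤ/p²`,
`k₁, r₃, k₂ ∈ ℤ/p`. -/
theorem stmt_16 (p : ℕ) [Fact p.Prime] (n m : ℕ) (hm : 1 ≤ m) (hn : 3 * m + 3 ≤ n) :
    let e : Fin 4 → Fin 4 → ℕ :=
      ![![m, m, 2*m, 3*m], ![n, m, m, 2*m], ![n, m, m, m], ![n, n, n, n]]
    let e' : Fin 4 → Fin 4 → ℕ :=
      ![![m, m+1, 2*m+2, 3*m+3], ![n, m, m+1, 2*m+2], ![n, m, m, m+1], ![n, n, n, n]]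
    let Dmat : ℤ_[p]ˣ → Matrix (Fin 4) (Fin 4) ℤ_[p] :=
      fun α => Matrix.diagonal ![(α : ℤ_[p]), 1, (α : ℤ_[p]), 1]
    let SV : Set (Matrix (Fin 4) (Fin 4) ℤ_[p] × ℤ_[p]ˣ) :=
      {x | IsUnit x.1.det ∧ ∀ i j, (p : ℤ_[p]) ^ (e i j) ∣ (x.1 i j - Dmat x.2 i j)}
    let SV' : Set (Matrix (Fin 4) (Fin 4) ℤ_[p] × ℤ_[p]ˣ) :=
      {x | IsUnit x.1.det ∧ ∀ i j, (p : ℤ_[p]) ^ (e' i j) ∣ (x.1 i j - Dmat x.2 i j)}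
    let W := ZMod (p^3) × ZMod (p^2) × ZMod (p^2) × ZMod p × ZMod p × ZMod p
    let σ : W → Matrix (Fin 4) (Fin 4) ℤ_[p] := fun w =>
      !![1, (p:ℤ_[p])^m * (w.2.2.2.1.val : ℤ_[p]), (p:ℤ_[p])^(2*m) * (w.2.1.val : ℤ_[p]),
            (p:ℤ_[p])^(3*m) * (w.1.val : ℤ_[p]);
         0, 1, (p:ℤ_[p])^m * (w.2.2.2.2.1.val : ℤ_[p]),
            (p:ℤ_[p])^(2*m) * (w.2.2.1.val : ℤ_[p]);
         0, 0, 1, (p:ℤ_[p])^m * (w.2.2.2.2.2.val : ℤ_[p]);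
         0, 0, 0, 1]
    (∀ x ∈ SV, ∃! w : W, ∃ y ∈ SV', x.1 = σ w * y.1 ∧ x.2 = y.2) ∧
      Nat.card W = p ^ 10 := by
  intro e e' Dmat SV SV' W σ
  obtain ⟨s, rfl⟩ : ∃ s, m = s + 1 := ⟨m - 1, by omega⟩
  obtain ⟨t, rfl⟩ : ∃ t, n = 3*(s+1)+3+t := ⟨n - (3*(s+1)+3), by omega⟩
  have pprime : p.Prime := Fact.out
  haveI : NeZero p := ⟨pprime.ne_zero⟩
  haveI : NeZero (p^2) := ⟨pow_ne_zero _ pprime.ne_zero⟩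
  haveI : NeZero (p^3) := ⟨pow_ne_zero _ pprime.ne_zero⟩
  constructor
  · rintro ⟨g, α⟩ hx
    simp only [SV, Set.mem_setOf_eq, e, Dmat] at hx
    obtain ⟨hdet, hcong⟩ := hx
    have h00 := hcong 0 0
    have h01 := hcong 0 1
    have h02 := hcong 0 2
    have h03 := hcong 0 3
    have h10 := hcong 1 0
    have h11 := hcong 1 1
    have h12 := hcong 1 2
    have h13 := hcong 1 3
    have h20 := hcong 2 0
    have h21 := hcong 2 1
    have h22 := hcong 2 2
    have h23 := hcong 2 3
    have h30 := hcong 3 0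
    have h31 := hcong 3 1
    have h32 := hcong 3 2
    have h33 := hcong 3 3
    simp at h00 h01 h02 h03 h10 h11 h12 h13 h20 h21 h22 h23 h30 h31 h32 h33
    obtain ⟨b00, hb00⟩ := h00
    obtain ⟨b01, hw01⟩ := h01
    obtain ⟨b02, hw02⟩ := h02
    obtain ⟨b03, hw03⟩ := h03
    obtain ⟨b10, hw10⟩ := h10
    obtain ⟨b11, hb11⟩ := h11
    obtain ⟨b12, hw12⟩ := h12
    obtain ⟨b13, hw13⟩ := h13
    obtain ⟨b20, hw20⟩ := h20
    obtain ⟨b21, hw21⟩ := h21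
    obtain ⟨b22, hb22⟩ := h22
    obtain ⟨b23, hw23⟩ := h23
    obtain ⟨b30, hw30⟩ := h30
    obtain ⟨b31, hw31⟩ := h31
    obtain ⟨b32, hw32⟩ := h32
    obtain ⟨b33, hb33⟩ := h33
    have hw20' : g 2 0 = (p:ℤ_[p])^(3*(s+1)+3+t) * b20 := hw20
    have hw30' : g 3 0 = (p:ℤ_[p])^(3*(s+1)+3+t) * b30 := hw30
    have hw00 : g 0 0 = (α:ℤ_[p]) + (p:ℤ_[p])^(s+1) * b00 := by linear_combination hb00
    have hw11 : g 1 1 = 1 + (p:ℤ_[p])^(s+1) * b11 := by linear_combination hb11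
    have hw22 : g 2 2 = (α:ℤ_[p]) + (p:ℤ_[p])^(s+1) * b22 := by linear_combination hb22
    have hw33 : g 3 3 = 1 + (p:ℤ_[p])^(3*(s+1)+3+t) * b33 := by linear_combination hb33
    -- the digits
    let k1z : ZMod p := PadicInt.toZMod (b01 * 1)
    let r3z : ZMod p := PadicInt.toZMod (b12 * ((α⁻¹ : ℤ_[p]ˣ) : ℤ_[p]))
    let k2z : ZMod p := PadicInt.toZMod (b23 * 1)
    let r4z : ZMod (p^2) := PadicInt.toZModPow 2 ((b13 - (r3z.val:ℤ_[p])*b23 + (r3z.val:ℤ_[p])*(k2z.val:ℤ_[p])*(1+(p:ℤ_[p])^(3*(s+1)+3+t)*b33)) * 1)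
    let Vα : ℤ_[p] := (α:ℤ_[p]) + (p:ℤ_[p])^(s+1)*b22 - (p:ℤ_[p])^(s+1)*(p:ℤ_[p])^(3*(s+1)+3+t)*(k2z.val:ℤ_[p])*b32
    have hVz : PadicInt.toZMod Vα = PadicInt.toZMod (α:ℤ_[p]) := by
      simp [Vα]
    have hVu : IsUnit Vα := Stmt16.isUnit_of_toZMod_ne_zero _ (by
      rw [hVz]; exact ((α.isUnit).map PadicInt.toZMod).ne_zero)
    obtain ⟨u, hu⟩ := hVu
    let Vi : ℤ_[p] := ((u⁻¹ : ℤ_[p]ˣ):ℤ_[p])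
    have hVVi : Vα * Vi = 1 := by rw [← hu]; exact u.mul_inv
    let r1z : ZMod (p^2) := PadicInt.toZModPow 2 ((b02 - (k1z.val:ℤ_[p])*(b12 - (r3z.val:ℤ_[p])*Vα - (p:ℤ_[p])^(s+1)*(p:ℤ_[p])^(3*(s+1)+3+t)*(r4z.val:ℤ_[p])*b32)) * Vi)
    let r2z : ZMod (p^3) := PadicInt.toZModPow 3 ((b03 - (k1z.val:ℤ_[p])*(b13 - (r3z.val:ℤ_[p])*b23 + (r3z.val:ℤ_[p])*(k2z.val:ℤ_[p])*(1+(p:ℤ_[p])^(3*(s+1)+3+t)*b33) - (r4z.val:ℤ_[p])*(1+(p:ℤ_[p])^(3*(s+1)+3+t)*b33)) - (r1z.val:ℤ_[p])*(b23 - (k2z.val:ℤ_[p])*(1+(p:ℤ_[p])^(3*(s+1)+3+t)*b33))) * 1)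
    -- divisibility facts defining the digits
    have hdiv23 : (p:ℤ_[p]) ∣ (b23 - (k2z.val:ℤ_[p]) * 1 + (p:ℤ_[p]) *
        (-((k2z.val:ℤ_[p])*(p:ℤ_[p])^(3*(s+1)+2+t)*b33))) :=
      (Stmt16.key1U _ _ _ _ (mul_one 1) k2z).mpr rfl
    have hdiv12 : (p:ℤ_[p]) ∣ (b12 - (r3z.val:ℤ_[p]) * (α:ℤ_[p]) + (p:ℤ_[p]) *
        (-((r3z.val:ℤ_[p])*((p:ℤ_[p])^s*b22 - (p:ℤ_[p])^s*(p:ℤ_[p])^(3*(s+1)+3+t)*(k2z.val:ℤ_[p])*b32))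
          - (p:ℤ_[p])^s*(p:ℤ_[p])^(3*(s+1)+3+t)*(r4z.val:ℤ_[p])*b32)) :=
      (Stmt16.key1U _ _ _ _ (Units.mul_inv α) r3z).mpr rfl
    have hdiv01 : (p:ℤ_[p]) ∣ (b01 - (k1z.val:ℤ_[p]) * 1 + (p:ℤ_[p]) *
        (-((k1z.val:ℤ_[p])*((p:ℤ_[p])^s*b11 - (p:ℤ_[p])^s*(p:ℤ_[p])^(s+1)*(r3z.val:ℤ_[p])*b21
            + (p:ℤ_[p])^s*(p:ℤ_[p])^(s+1)*(p:ℤ_[p])^(3*(s+1)+3+t)*(r3z.val:ℤ_[p])*(k2z.val:ℤ_[p])*b31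
            - (p:ℤ_[p])^s*(p:ℤ_[p])^(s+1)*(p:ℤ_[p])^(3*(s+1)+3+t)*(r4z.val:ℤ_[p])*b31))
          - (p:ℤ_[p])^(2*s+1)*(r1z.val:ℤ_[p])*b21
          + (p:ℤ_[p])^(2*s+1)*(p:ℤ_[p])^(3*(s+1)+3+t)*(r1z.val:ℤ_[p])*(k2z.val:ℤ_[p])*b31
          - (p:ℤ_[p])^(2*s+1)*(p:ℤ_[p])^(3*(s+1)+3+t)*(r2z.val:ℤ_[p])*b31)) :=
      (Stmt16.key1U _ _ _ _ (mul_one 1) k1z).mpr rfl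
    have hdiv13 : (p:ℤ_[p])^2 ∣ ((b13 - (r3z.val:ℤ_[p])*b23 + (r3z.val:ℤ_[p])*(k2z.val:ℤ_[p])*(1+(p:ℤ_[p])^(3*(s+1)+3+t)*b33))
        - (r4z.val:ℤ_[p]) * 1 + (p:ℤ_[p])^2 * (-((r4z.val:ℤ_[p])*(p:ℤ_[p])^(3*(s+1)+1+t)*b33))) :=
      (Stmt16.keyU 2 _ _ _ _ (mul_one 1) r4z).mpr rfl
    have hdiv02 : (p:ℤ_[p])^2 ∣ ((b02 - (k1z.val:ℤ_[p])*(b12 - (r3z.val:ℤ_[p])*Vα - (p:ℤ_[p])^(s+1)*(p:ℤ_[p])^(3*(s+1)+3+t)*(r4z.val:ℤ_[p])*b32))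
        - (r1z.val:ℤ_[p]) * Vα + (p:ℤ_[p])^2 * (-((r2z.val:ℤ_[p])*(p:ℤ_[p])^(4*s+5+t)*b32))) :=
      (Stmt16.keyU 2 _ _ _ _ hVVi r1z).mpr rfl
    have hdiv03 : (p:ℤ_[p])^3 ∣ ((b03 - (k1z.val:ℤ_[p])*(b13 - (r3z.val:ℤ_[p])*b23 + (r3z.val:ℤ_[p])*(k2z.val:ℤ_[p])*(1+(p:ℤ_[p])^(3*(s+1)+3+t)*b33) - (r4z.val:ℤ_[p])*(1+(p:ℤ_[p])^(3*(s+1)+3+t)*b33)) - (r1z.val:ℤ_[p])*(b23 - (k2z.val:ℤ_[p])*(1+(p:ℤ_[p])^(3*(s+1)+3+t)*b33)))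
        - (r2z.val:ℤ_[p]) * 1 + (p:ℤ_[p])^3 * (-((r2z.val:ℤ_[p])*(p:ℤ_[p])^(3*s+3+t)*b33))) :=
      (Stmt16.keyU 3 _ _ _ _ (mul_one 1) r2z).mpr rfl
    obtain ⟨q23, hq23⟩ := hdiv23
    obtain ⟨q12, hq12⟩ := hdiv12
    obtain ⟨q01, hq01⟩ := hdiv01
    obtain ⟨q13, hq13⟩ := hdiv13
    obtain ⟨q02, hq02⟩ := hdiv02
    obtain ⟨q03, hq03⟩ := hdiv03
    simp only [Vα] at hq02
    -- the coset representative matrix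
    let Yr3 : Fin 4 → ℤ_[p] := fun j => g 3 j
    let Yr2 : Fin 4 → ℤ_[p] := fun j => g 2 j - (p:ℤ_[p])^(s+1)*(k2z.val:ℤ_[p])*g 3 j
    let Yr1 : Fin 4 → ℤ_[p] := fun j => g 1 j - (p:ℤ_[p])^(s+1)*(r3z.val:ℤ_[p])*(g 2 j - (p:ℤ_[p])^(s+1)*(k2z.val:ℤ_[p])*g 3 j) - (p:ℤ_[p])^(2*(s+1))*(r4z.val:ℤ_[p])*g 3 j
    let Yr0 : Fin 4 → ℤ_[p] := fun j => g 0 j - (p:ℤ_[p])^(s+1)*(k1z.val:ℤ_[p])*(g 1 j - (p:ℤ_[p])^(s+1)*(r3z.val:ℤ_[p])*(g 2 j - (p:ℤ_[p])^(s+1)*(k2z.val:ℤ_[p])*g 3 j) - (p:ℤ_[p])^(2*(s+1))*(r4z.val:ℤ_[p])*g 3 j) - (p:ℤ_[p])^(2*(s+1))*(r1z.val:ℤ_[p])*(g 2 j - (p:ℤ_[p])^(s+1)*(k2z.val:ℤ_[p])*g 3 j) - (p:ℤ_[p])^(3*(s+1))*(r2z.val:ℤ_[p])*g 3 j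
    let Ymat : Matrix (Fin 4) (Fin 4) ℤ_[p] := Matrix.of ![Yr0, Yr1, Yr2, Yr3]
    let w₀ : W := (r2z, r1z, r4z, k1z, r3z, k2z)
    have hfact : g = σ w₀ * Ymat := by
      ext i j
      fin_cases i <;> fin_cases j <;>
        simp [σ, w₀, Ymat, Yr0, Yr1, Yr2, Yr3, Matrix.mul_apply, Fin.sum_univ_four] <;> ring
    have hdetY : IsUnit Ymat.det := by
      rw [hfact, Matrix.det_mul] at hdet; exact isUnit_of_mul_isUnit_right hdet
    -- the sixteen congruences for the representative
    have m00 : (p:ℤ_[p])^(s+1) ∣ (Yr0 0 - (α:ℤ_[p])) := by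
      simp only [Yr0]
      rw [hw00, hw10, hw20', hw30']
      exact ⟨b00 - (p:ℤ_[p])^(3*(s+1)+3+t)*(k1z.val:ℤ_[p])*(b10 - (p:ℤ_[p])^(s+1)*(r3z.val:ℤ_[p])*b20 + (p:ℤ_[p])^(2*(s+1))*(r3z.val:ℤ_[p])*(k2z.val:ℤ_[p])*b30 - (p:ℤ_[p])^(2*(s+1))*(r4z.val:ℤ_[p])*b30) - (p:ℤ_[p])^(s+1)*(p:ℤ_[p])^(3*(s+1)+3+t)*(r1z.val:ℤ_[p])*(b20 - (p:ℤ_[p])^(s+1)*(k2z.val:ℤ_[p])*b30) - (p:ℤ_[p])^(2*(s+1))*(p:ℤ_[p])^(3*(s+1)+3+t)*(r2z.val:ℤ_[p])*b30, by ring⟩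
    have m01 : (p:ℤ_[p])^(s+1+1) ∣ (Yr0 1 - 0) := by
      simp only [Yr0]
      rw [hw01, hw11, hw21, hw31]
      exact ⟨q01, by linear_combination (p:ℤ_[p])^(s+1) * hq01⟩
    have m02 : (p:ℤ_[p])^(2*(s+1)+2) ∣ (Yr0 2 - 0) := by
      simp only [Yr0]
      rw [hw02, hw12, hw22, hw32]
      exact ⟨q02, by linear_combination (p:ℤ_[p])^(2*(s+1)) * hq02⟩
    have m03 : (p:ℤ_[p])^(3*(s+1)+3) ∣ (Yr0 3 - 0) := by
      simp only [Yr0]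
      rw [hw03, hw13, hw23, hw33]
      exact ⟨q03, by linear_combination (p:ℤ_[p])^(3*(s+1)) * hq03⟩
    have m10 : (p:ℤ_[p])^(3*(s+1)+3+t) ∣ (Yr1 0 - 0) := by
      simp only [Yr1]
      rw [hw10, hw20', hw30']
      exact ⟨b10 - (p:ℤ_[p])^(s+1)*(r3z.val:ℤ_[p])*b20 + (p:ℤ_[p])^(2*(s+1))*(r3z.val:ℤ_[p])*(k2z.val:ℤ_[p])*b30 - (p:ℤ_[p])^(2*(s+1))*(r4z.val:ℤ_[p])*b30, by ring⟩
    have m11 : (p:ℤ_[p])^(s+1) ∣ (Yr1 1 - 1) := by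
      simp only [Yr1]
      rw [hw11, hw21, hw31]
      exact ⟨b11 - (r3z.val:ℤ_[p])*((p:ℤ_[p])^(s+1)*b21 - (p:ℤ_[p])^(s+1)*(p:ℤ_[p])^(3*(s+1)+3+t)*(k2z.val:ℤ_[p])*b31) - (p:ℤ_[p])^(s+1)*(p:ℤ_[p])^(3*(s+1)+3+t)*(r4z.val:ℤ_[p])*b31, by ring⟩
    have m12 : (p:ℤ_[p])^(s+1+1) ∣ (Yr1 2 - 0) := by
      simp only [Yr1]
      rw [hw12, hw22, hw32]
      exact ⟨q12, by linear_combination (p:ℤ_[p])^(s+1) * hq12⟩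
    have m13 : (p:ℤ_[p])^(2*(s+1)+2) ∣ (Yr1 3 - 0) := by
      simp only [Yr1]
      rw [hw13, hw23, hw33]
      exact ⟨q13, by linear_combination (p:ℤ_[p])^(2*(s+1)) * hq13⟩
    have m20 : (p:ℤ_[p])^(3*(s+1)+3+t) ∣ (Yr2 0 - 0) := by
      simp only [Yr2]
      rw [hw20', hw30']
      exact ⟨b20 - (p:ℤ_[p])^(s+1)*(k2z.val:ℤ_[p])*b30, by ring⟩
    have m21 : (p:ℤ_[p])^(s+1) ∣ (Yr2 1 - 0) := by
      simp only [Yr2]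
      rw [hw21, hw31]
      exact ⟨b21 - (p:ℤ_[p])^(3*(s+1)+3+t)*(k2z.val:ℤ_[p])*b31, by ring⟩
    have m22 : (p:ℤ_[p])^(s+1) ∣ (Yr2 2 - (α:ℤ_[p])) := by
      simp only [Yr2]
      rw [hw22, hw32]
      exact ⟨b22 - (p:ℤ_[p])^(3*(s+1)+3+t)*(k2z.val:ℤ_[p])*b32, by ring⟩
    have m23 : (p:ℤ_[p])^(s+1+1) ∣ (Yr2 3 - 0) := by
      simp only [Yr2]
      rw [hw23, hw33]
      exact ⟨q23, by linear_combination (p:ℤ_[p])^(s+1) * hq23⟩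
    have m30 : (p:ℤ_[p])^(3*(s+1)+3+t) ∣ (Yr3 0 - 0) := by
      simp only [Yr3]
      rw [hw30']
      exact ⟨b30, by ring⟩
    have m31 : (p:ℤ_[p])^(3*(s+1)+3+t) ∣ (Yr3 1 - 0) := by
      simp only [Yr3]
      rw [hw31]
      exact ⟨b31, by ring⟩
    have m32 : (p:ℤ_[p])^(3*(s+1)+3+t) ∣ (Yr3 2 - 0) := by
      simp only [Yr3]
      rw [hw32]
      exact ⟨b32, by ring⟩
    have m33 : (p:ℤ_[p])^(3*(s+1)+3+t) ∣ (Yr3 3 - 1) := by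
      simp only [Yr3]
      rw [hw33]
      exact ⟨b33, by ring⟩
    refine ⟨w₀, ⟨(Ymat, α), ?_, hfact, rfl⟩, ?_⟩
    · simp only [SV', Set.mem_setOf_eq]
      refine ⟨hdetY, ?_⟩
      intro i j
      fin_cases i <;> fin_cases j
      exacts [m00, m01, m02, m03, m10, m11, m12, m13, m20, m21, m22, m23, m30, m31, m32, m33]
    · rintro ⟨r2w, r1w, r4w, k1w, r3w, k2w⟩ ⟨⟨Y, β⟩, hySV', hfac0, hsnd⟩
      have hβ : α = β := hsnd
      subst hβ
      simp only [SV', Set.mem_setOf_eq] at hySV'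
      obtain ⟨-, hcg⟩ := hySV'
      have hfac : g = σ (r2w, r1w, r4w, k1w, r3w, k2w) * Y := hfac0
      have hR3 : ∀ j, Y 3 j = g 3 j := by
        intro j
        have hh := congr_fun (congr_fun hfac 3) j
        simp [σ, Matrix.mul_apply, Fin.sum_univ_four] at hh
        linear_combination -hh
      have hR2 : ∀ j, Y 2 j = g 2 j - (p:ℤ_[p])^(s+1)*(k2w.val:ℤ_[p])*g 3 j := by
        intro j
        have hh := congr_fun (congr_fun hfac 2) j
        simp [σ, Matrix.mul_apply, Fin.sum_univ_four] at hh
        simp only [← ZMod.natCast_val] at hh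
        rw [hR3 j] at hh
        linear_combination -hh
      have hR1 : ∀ j, Y 1 j = g 1 j - (p:ℤ_[p])^(s+1)*(r3w.val:ℤ_[p])*(g 2 j - (p:ℤ_[p])^(s+1)*(k2w.val:ℤ_[p])*g 3 j) - (p:ℤ_[p])^(2*(s+1))*(r4w.val:ℤ_[p])*g 3 j := by
        intro j
        have hh := congr_fun (congr_fun hfac 1) j
        simp [σ, Matrix.mul_apply, Fin.sum_univ_four] at hh
        simp only [← ZMod.natCast_val] at hh
        rw [hR2 j, hR3 j] at hh
        linear_combination -hh
      have hR0 : ∀ j, Y 0 j = g 0 j - (p:ℤ_[p])^(s+1)*(k1w.val:ℤ_[p])*(g 1 j - (p:ℤ_[p])^(s+1)*(r3w.val:ℤ_[p])*(g 2 j - (p:ℤ_[p])^(s+1)*(k2w.val:ℤ_[p])*g 3 j) - (p:ℤ_[p])^(2*(s+1))*(r4w.val:ℤ_[p])*g 3 j) - (p:ℤ_[p])^(2*(s+1))*(r1w.val:ℤ_[p])*(g 2 j - (p:ℤ_[p])^(s+1)*(k2w.val:ℤ_[p])*g 3 j) - (p:ℤ_[p])^(3*(s+1))*(r2w.val:ℤ_[p])*g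 3 j := by
        intro j
        have hh := congr_fun (congr_fun hfac 0) j
        simp [σ, Matrix.mul_apply, Fin.sum_univ_four] at hh
        simp only [← ZMod.natCast_val] at hh
        rw [hR1 j, hR2 j, hR3 j] at hh
        linear_combination -hh
      -- digit k2
      have c23 : (p:ℤ_[p])^(s+1+1) ∣ (Y 2 3 - 0) := hcg 2 3
      rw [sub_zero, hR2 3, hw23, hw33] at c23
      obtain ⟨v23, hv23⟩ := c23
      have hk2 : k2w = k2z := by
        have hc := mul_left_cancel₀ (pow_ne_zero (s+1) (Stmt16.pne (p := p)))
          (show (p:ℤ_[p])^(s+1) * (b23 - (k2w.val:ℤ_[p])*1 + (p:ℤ_[p])*(-((k2w.val:ℤ_[p])*(p:ℤ_[p])^(3*(s+1)+2+t)*b33)))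
              = (p:ℤ_[p])^(s+1)*((p:ℤ_[p])*v23) from by linear_combination hv23)
        exact (Stmt16.key1U _ _ _ _ (mul_one 1) k2w).mp ⟨v23, hc⟩
      -- digit r3
      have c12 : (p:ℤ_[p])^(s+1+1) ∣ (Y 1 2 - 0) := hcg 1 2
      rw [sub_zero, hR1 2, hw12, hw22, hw32] at c12
      obtain ⟨v12, hv12⟩ := c12
      have hr3 : r3w = r3z := by
        have hc := mul_left_cancel₀ (pow_ne_zero (s+1) (Stmt16.pne (p := p)))
          (show (p:ℤ_[p])^(s+1) * (b12 - (r3w.val:ℤ_[p])*(α:ℤ_[p]) + (p:ℤ_[p])*(-((r3w.val:ℤ_[p])*((p:ℤ_[p])^s*b22 - (p:ℤ_[p])^s*(p:ℤ_[p])^(3*(s+1)+3+t)*(k2w.val:ℤ_[p])*b32)) - (p:ℤ_[p])^s*(p:ℤ_[p])^(3*(s+1)+3+t)*(r4w.val:ℤ_[p])*b32))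
              = (p:ℤ_[p])^(s+1)*((p:ℤ_[p])*v12) from by linear_combination hv12)
        exact (Stmt16.key1U _ _ _ _ (Units.mul_inv α) r3w).mp ⟨v12, hc⟩
      -- digit k1
      have c01 : (p:ℤ_[p])^(s+1+1) ∣ (Y 0 1 - 0) := hcg 0 1
      rw [sub_zero, hR0 1, hw01, hw11, hw21, hw31] at c01
      obtain ⟨v01, hv01⟩ := c01
      have hk1 : k1w = k1z := by
        have hc := mul_left_cancel₀ (pow_ne_zero (s+1) (Stmt16.pne (p := p)))
          (show (p:ℤ_[p])^(s+1) * (b01 - (k1w.val:ℤ_[p])*1 + (p:ℤ_[p])*(-((k1w.val:ℤ_[p])*((p:ℤ_[p])^s*b11 - (p:ℤ_[p])^s*(p:ℤ_[p])^(s+1)*(r3w.val:ℤ_[p])*b21 + (p:ℤ_[p])^s*(p:ℤ_[p])^(s+1)*(p:ℤ_[p])^(3*(s+1)+3+t)*(r3w.val:ℤ_[p])*(k2w.val:ℤ_[p])*b31 - (p:ℤ_[p])^s*(p:ℤ_[p])^(s+1)*(p:ℤ_[p])^(3*(s+1)+3+t)*(r4w.val:ℤ_[p])*b31)) - (p:ℤ_[p])^(2*s+1)*(r1w.val:ℤ_[p])*b21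 + (p:ℤ_[p])^(2*s+1)*(p:ℤ_[p])^(3*(s+1)+3+t)*(r1w.val:ℤ_[p])*(k2w.val:ℤ_[p])*b31 - (p:ℤ_[p])^(2*s+1)*(p:ℤ_[p])^(3*(s+1)+3+t)*(r2w.val:ℤ_[p])*b31))
              = (p:ℤ_[p])^(s+1)*((p:ℤ_[p])*v01) from by linear_combination hv01)
        exact (Stmt16.key1U _ _ _ _ (mul_one 1) k1w).mp ⟨v01, hc⟩
      -- digit r4
      have c13 : (p:ℤ_[p])^(2*(s+1)+2) ∣ (Y 1 3 - 0) := hcg 1 3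
      rw [sub_zero, hR1 3, hw13, hw23, hw33] at c13
      rw [hk2, hr3] at c13
      obtain ⟨v13, hv13⟩ := c13
      have hr4 : r4w = r4z := by
        have hc := mul_left_cancel₀ (pow_ne_zero (2*(s+1)) (Stmt16.pne (p := p)))
          (show (p:ℤ_[p])^(2*(s+1)) * ((b13 - (r3z.val:ℤ_[p])*b23 + (r3z.val:ℤ_[p])*(k2z.val:ℤ_[p])*(1+(p:ℤ_[p])^(3*(s+1)+3+t)*b33)) - (r4w.val:ℤ_[p])*1 + (p:ℤ_[p])^2*(-((r4w.val:ℤ_[p])*(p:ℤ_[p])^(3*(s+1)+1+t)*b33)))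
              = (p:ℤ_[p])^(2*(s+1))*((p:ℤ_[p])^2*v13) from by linear_combination hv13)
        exact (Stmt16.keyU 2 _ _ _ _ (mul_one 1) r4w).mp ⟨v13, hc⟩
      -- digit r1
      have c02 : (p:ℤ_[p])^(2*(s+1)+2) ∣ (Y 0 2 - 0) := hcg 0 2
      rw [sub_zero, hR0 2, hw02, hw12, hw22, hw32] at c02
      rw [hk2, hr3, hk1, hr4] at c02
      obtain ⟨v02, hv02⟩ := c02
      have hr1 : r1w = r1z := by
        have hc := mul_left_cancel₀ (pow_ne_zero (2*(s+1)) (Stmt16.pne (p := p)))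
          (show (p:ℤ_[p])^(2*(s+1)) * ((b02 - (k1z.val:ℤ_[p])*(b12 - (r3z.val:ℤ_[p])*Vα - (p:ℤ_[p])^(s+1)*(p:ℤ_[p])^(3*(s+1)+3+t)*(r4z.val:ℤ_[p])*b32)) - (r1w.val:ℤ_[p])*Vα + (p:ℤ_[p])^2*(-((r2w.val:ℤ_[p])*(p:ℤ_[p])^(4*s+5+t)*b32)))
              = (p:ℤ_[p])^(2*(s+1))*((p:ℤ_[p])^2*v02) from by simp only [Vα]; linear_combination hv02)
        exact (Stmt16.keyU 2 _ _ _ _ hVVi r1w).mp ⟨v02, hc⟩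
      -- digit r2
      have c03 : (p:ℤ_[p])^(3*(s+1)+3) ∣ (Y 0 3 - 0) := hcg 0 3
      rw [sub_zero, hR0 3, hw03, hw13, hw23, hw33] at c03
      rw [hk2, hr3, hk1, hr4, hr1] at c03
      obtain ⟨v03, hv03⟩ := c03
      have hr2 : r2w = r2z := by
        have hc := mul_left_cancel₀ (pow_ne_zero (3*(s+1)) (Stmt16.pne (p := p)))
          (show (p:ℤ_[p])^(3*(s+1)) * ((b03 - (k1z.val:ℤ_[p])*(b13 - (r3z.val:ℤ_[p])*b23 + (r3z.val:ℤ_[p])*(k2z.val:ℤ_[p])*(1+(p:ℤ_[p])^(3*(s+1)+3+t)*b33) - (r4z.val:ℤ_[p])*(1+(p:ℤ_[p])^(3*(s+1)+3+t)*b33)) - (r1z.val:ℤ_[p])*(b23 - (k2z.val:ℤ_[p])*(1+(p:ℤ_[p])^(3*(s+1)+3+t)*b33))) - (r2w.val:ℤ_[p])*1 + (p:ℤ_[p])^3*(-((r2w.val:ℤ_[p])*(p:ℤ_[p])^(3*s+3+t)*b33)))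
              = (p:ℤ_[p])^(3*(s+1))*((p:ℤ_[p])^3*v03) from by linear_combination hv03)
        exact (Stmt16.keyU 3 _ _ _ _ (mul_one 1) r2w).mp ⟨v03, hc⟩
      simp only [w₀]
      rw [hr2, hr1, hr4, hk1, hr3, hk2]
  · simp only [W]
    simp [Nat.card_eq_fintype_card, ZMod.card]
    ring
end

section
/- Let G be a group acting on a set Y on the right without fixed points (i.e., y·v = y implies v = 1), let U ⊆ V ⊆ G be subgroups, and let z, z' ∈ Y. If z = z'·u for some u ∈ U and z = z'·v for some v ∈ W, where W ⊆ G is any subset, then v = u ∈ U. Consequently, if the quotient map Y/U → Y/V is injective and V acts freely, then for any subgroup V₁ ⊆ V with U₁ := V₁ ∩ H ⊆ U (for H a subgroup containing U), the map Y_H/U₁ → Y/V₁ is injective whenever Y_H/U → Y/V is. -/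
/-- For a fixed-point-free right action of a group `G` on a set `Y`: if `z = z'·u` with
`u ∈ U` and `z = z'·v`, then `v = u ∈ U`. Consequently, for subgroups `U ≤ V`, `U ≤ H`,
`V₁ ≤ V` with `V₁ ⊓ H ≤ U`, if the map `Y/U → Y/V` is injective (every `V`-relation
between points is realised in `U`), then so is `Y/(V₁ ⊓ H) → Y/V₁`. -/
theorem stmt_18 (G : Type*) [Group G] (Y : Type*) (act : Y → G → Y)
    (hact_one : ∀ y, act y 1 = y)
    (hact_mul : ∀ (y : Y) (g h : G), act (act y g) h = act y (g * h))
    (hfree : ∀ (y : Y) (v : G), act y v = y → v = 1)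
    (U V H V₁ : Subgroup G) (hUV : U ≤ V) (hUH : U ≤ H) (hV₁ : V₁ ≤ V)
    (hU₁ : V₁ ⊓ H ≤ U) :
    (∀ (z z' : Y) (u v : G), u ∈ U → act z' u = z → act z' v = z → v = u ∧ v ∈ U) ∧
      ((∀ z z' : Y, (∃ v ∈ V, act z' v = z) → ∃ u ∈ U, act z' u = z) →
        ∀ z z' : Y, (∃ v ∈ V₁, act z' v = z) → ∃ u ∈ V₁ ⊓ H, act z' u = z) := by
  have key : ∀ (z z' : Y) (u v : G), u ∈ U → act z' u = z → act z' v = z → v = u ∧ v ∈ U := by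
    intro z z' u v hu h1 h2
    have h3 : act z' (v * u⁻¹) = z' := by
      rw [← hact_mul, h2, ← h1, hact_mul, mul_inv_cancel, hact_one]
    have h4 : v * u⁻¹ = 1 := hfree z' _ h3
    have h5 : v = u := by
      have := mul_eq_one_iff_eq_inv.mp h4
      simpa using this
    exact ⟨h5, h5 ▸ hu⟩
  refine ⟨key, ?_⟩
  intro hinj z z' ⟨v₁, hv₁, hv₁z⟩
  obtain ⟨u, hu, huz⟩ := hinj z z' ⟨v₁, hV₁ hv₁, hv₁z⟩
  obtain ⟨heq, hvU⟩ := key z z' u v₁ hu huz hv₁z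
  exact ⟨v₁, ⟨hv₁, hUH hvU⟩, hv₁z⟩
end
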